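/- The rank counts for semi-strict unimodal sequences are weakly increasing in n: for every integer m and all n ≥ 0, dm(m,n) ≤ dm(m,n+1). -/

import Mathlib

/-- A semi-strict unimodal sequence, represented as
(parts before the peak, the peak, parts after the peak). -/
def IsSemiStrictUnimodal (n : ℕ) (x : List ℕ × ℕ × List ℕ) : Prop :=
  x.1.Pairwise (· < ·) ∧ x.2.2.Pairwise (· ≥ ·) ∧
  (∀ y ∈ x.1, 0 < y ∧ y < x.2.1) ∧ (∀ y ∈ x.2.2, 0 < y ∧ y < x.2.1) ∧
  0 < x.2.1 ∧ x.1.sum + x.2.1 + x.2.2.sum = n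

/-- the rank: number of parts after the peak minus number of parts before the peak -/
def unimodalRank (x : List ℕ × ℕ × List ℕ) : ℤ := (x.2.2.length : ℤ) - x.1.length

/-- `dm(m,n)`: the number of semi-strict unimodal sequences of size `n` and rank `m` -/
noncomputable def dmCount (m : ℤ) (n : ℕ) : ℕ :=
  Set.ncard {x : List ℕ × ℕ × List ℕ | IsSemiStrictUnimodal n x ∧ unimodalRank x = m}

lemma bddLists_finite (N : ℕ) :
    {l : List ℕ | l.length ≤ N ∧ ∀ a ∈ l, a ≤ N}.Finite := by
  have h : {l : List ℕ | l.length ≤ N ∧ ∀ a ∈ l, a ≤ N} ⊆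
      (fun l : List (Fin (N + 1)) => l.map Fin.val) '' {l | l.length ≤ N} := by
    rintro l ⟨hlen, hmem⟩
    refine ⟨l.map (fun a => (⟨min a N, by omega⟩ : Fin (N + 1))), by simpa using hlen, ?_⟩
    simp only [List.map_map]
    calc List.map _ l = l.map id :=
          List.map_congr_left fun a ha => by simpa using min_eq_left (hmem a ha)
      _ = l := List.map_id l
  exact ((List.finite_length_le _ N).image _).subset h

lemma unimodal_finite (N : ℕ) :
    {x : List ℕ × ℕ × List ℕ | IsSemiStrictUnimodal N x}.Finite := by
  have hS := bddLists_finite N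
  refine Set.Finite.subset (hS.prod ((Set.finite_Iic N).prod hS)) ?_
  rintro ⟨l, p, r⟩ ⟨_, _, hl, hr, hp, hsum⟩
  simp only [Set.mem_prod, Set.mem_setOf_eq, Set.mem_Iic]
  simp only at hl hr hp hsum
  have hlsum : l.length ≤ l.sum := List.length_le_sum_of_one_le _ fun i hi => (hl i hi).1
  have hrsum : r.length ≤ r.sum := List.length_le_sum_of_one_le _ fun i hi => (hr i hi).1
  refine ⟨⟨by omega, fun a ha => ?_⟩, by omega, by omega, fun a ha => ?_⟩
  · have := List.single_le_sum (fun i _ => Nat.zero_le i) a ha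
    omega
  · have := List.single_le_sum (fun i _ => Nat.zero_le i) a ha
    omega

theorem semistrict_rank_counts_mono (m : ℤ) (n : ℕ) : dmCount m n ≤ dmCount m (n + 1) := by
  refine Set.ncard_le_ncard_of_injOn (fun x => (x.1, x.2.1 + 1, x.2.2)) ?_ ?_
    ((unimodal_finite (n + 1)).subset fun x hx => hx.1)
  · rintro ⟨l, p, r⟩ ⟨⟨h1, h2, h3, h4, h5, h6⟩, hrank⟩
    simp only [IsSemiStrictUnimodal, unimodalRank, Set.mem_setOf_eq] at *
    refine ⟨⟨h1, h2, fun y hy => ⟨(h3 y hy).1, by have := (h3 y hy).2; omega⟩,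
      fun y hy => ⟨(h4 y hy).1, by have := (h4 y hy).2; omega⟩, by omega, by omega⟩, hrank⟩
  · rintro ⟨l, p, r⟩ - ⟨l', p', r'⟩ - h
    simp only [Prod.mk.injEq] at h
    obtain ⟨h1, h2, h3⟩ := h
    simp [h1, h3, Nat.add_right_cancel h2]
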